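/- The intersection over all disturbance vectors d ∈ D = [-ξ,ξ]^{Γ²} of the polyhedra P(d,E) equals the set of constant vectors {π·𝟏 : π ∈ ℝ}. -/

import Mathlib

/-- the intersection of P(d,E) over all d ∈ D = [-ξ,ξ]^{Γ²} equals the
set of constant vectors. -/
theorem inter_P_over_D_eq_constants
    (n : ℕ) (hn : 2 ≤ n) (G : SimpleGraph (Fin n)) [DecidableRel G.Adj]
    (hconn : G.Connected) (hN : ∀ i, (G.neighborFinset i).Nonempty)
    (ξ : ℝ) (hξ : 0 < ξ) :
    (⋂ d ∈ {d : Fin n → Fin n → ℝ | ∀ i j, -ξ ≤ d i j ∧ d i j ≤ ξ},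
        {x : Fin n → ℝ | ∀ i : Fin n,
          -(∑ j ∈ G.neighborFinset i, d i j) / ((G.neighborFinset i).card : ℝ) - ξ ≤
            (∑ j ∈ G.neighborFinset i, x j) / ((G.neighborFinset i).card : ℝ) - x i ∧
          (∑ j ∈ G.neighborFinset i, x j) / ((G.neighborFinset i).card : ℝ) - x i ≤
            -(∑ j ∈ G.neighborFinset i, d i j) / ((G.neighborFinset i).card : ℝ) + ξ})
      = {x : Fin n → ℝ | ∃ π : ℝ, x = fun _ => π} := by
  ext x
  simp only [Set.mem_iInter, Set.mem_setOf_eq]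
  constructor
  · intro hx
    have key : ∀ i, ∑ j ∈ G.neighborFinset i, x j = ((G.neighborFinset i).card : ℝ) * x i := by
      intro i
      have hc : (0:ℝ) < ((G.neighborFinset i).card : ℝ) := by
        exact_mod_cast Finset.card_pos.mpr (hN i)
      have h1 := (hx (fun _ _ => ξ) (fun i j => ⟨by show -ξ ≤ ξ; linarith, le_refl ξ⟩) i).2
      have h2 := (hx (fun _ _ => -ξ) (fun i j => ⟨le_refl _, by show -ξ ≤ ξ; linarith⟩) i).1
      have hs1 : ∑ _j ∈ G.neighborFinset i, (ξ:ℝ) = ((G.neighborFinset i).card : ℝ) * ξ := by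
        simp [mul_comm]
      have hs2 : ∑ _j ∈ G.neighborFinset i, (-ξ:ℝ) = ((G.neighborFinset i).card : ℝ) * (-ξ) := by
        simp [mul_comm]
      rw [hs1] at h1
      rw [hs2] at h2
      have e1 : -(((G.neighborFinset i).card : ℝ) * ξ) / ((G.neighborFinset i).card : ℝ) = -ξ := by
        rw [neg_div, mul_div_cancel_left₀ _ (ne_of_gt hc)]
      have e2 : -(((G.neighborFinset i).card : ℝ) * (-ξ)) / ((G.neighborFinset i).card : ℝ) = ξ := by
        rw [neg_div, mul_div_cancel_left₀ _ (ne_of_gt hc), neg_neg]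
      rw [e1] at h1
      rw [e2] at h2
      have hle : (∑ j ∈ G.neighborFinset i, x j) / ((G.neighborFinset i).card : ℝ) = x i := by
        linarith
      rw [div_eq_iff (ne_of_gt hc)] at hle
      rw [hle]; ring
    obtain ⟨i0, -, hmax⟩ := Finset.exists_max_image Finset.univ x
      ⟨⟨0, by omega⟩, Finset.mem_univ _⟩
    have step : ∀ i, x i = x i0 → ∀ j ∈ G.neighborFinset i, x j = x i0 := by
      intro i hi j hj
      by_contra hne
      have hlt : x j < x i0 := lt_of_le_of_ne (hmax j (Finset.mem_univ j)) hne
      have hsum : ∑ k ∈ G.neighborFinset i, x k < ∑ _k ∈ G.neighborFinset i, x i0 :=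
        Finset.sum_lt_sum (fun k _ => hmax k (Finset.mem_univ k)) ⟨j, hj, hlt⟩
      rw [key i, hi, Finset.sum_const, nsmul_eq_mul] at hsum
      exact lt_irrefl _ hsum
    have hall : ∀ (a b : Fin n), G.Walk a b → x a = x i0 → x b = x i0 := by
      intro a b w
      induction w with
      | nil => exact id
      | cons h p ih =>
        intro hu
        exact ih (step _ hu _ ((SimpleGraph.mem_neighborFinset _ _ _).mpr h))
    refine ⟨x i0, funext fun i => ?_⟩
    obtain ⟨w⟩ := hconn.preconnected i0 i
    exact hall i0 i w rfl
  · rintro ⟨π, rfl⟩ d hd i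
    have hc : (0:ℝ) < ((G.neighborFinset i).card : ℝ) := by
      exact_mod_cast Finset.card_pos.mpr (hN i)
    set c : ℝ := ((G.neighborFinset i).card : ℝ) with hcdef
    have hx0 : (∑ _j ∈ G.neighborFinset i, π) / c - π = 0 := by
      rw [Finset.sum_const, nsmul_eq_mul, hcdef,
        mul_div_cancel_left₀ _ (ne_of_gt hc), sub_self]
    have hdhi : ∑ j ∈ G.neighborFinset i, d i j ≤ c * ξ := by
      calc ∑ j ∈ G.neighborFinset i, d i j ≤ ∑ _j ∈ G.neighborFinset i, ξ :=
            Finset.sum_le_sum (fun j _ => (hd i j).2)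
        _ = c * ξ := by rw [Finset.sum_const, nsmul_eq_mul]
    have hdlo : -(c * ξ) ≤ ∑ j ∈ G.neighborFinset i, d i j := by
      calc -(c * ξ) = ∑ _j ∈ G.neighborFinset i, (-ξ) := by
            rw [Finset.sum_const, nsmul_eq_mul]; ring
        _ ≤ ∑ j ∈ G.neighborFinset i, d i j :=
            Finset.sum_le_sum (fun j _ => (hd i j).1)
    rw [hx0]
    constructor
    · have : -(∑ j ∈ G.neighborFinset i, d i j) / c ≤ ξ := by
        rw [div_le_iff₀ hc]
        nlinarith
      linarith
    · have : -ξ ≤ -(∑ j ∈ G.neighborFinset i, d i j) / c := by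
        rw [le_div_iff₀ hc]
        nlinarith
      linarith
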